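/- Let X be a topological space and let τ be a topology on C(X,$) whose open sets are all openly isotone. For each n ≥ 1 let αₙ be a filter on C(X,$) admitting a base of openly isotone families, and suppose αₙ converges to X (the whole space, as an element of C(X,$)) in τ. Then the filter on C(X,ℝ) generated by the sets [𝒜,Wₙ] := {f ∈ C(X,ℝ) : f⁻¹(Wₙ) ∈ 𝒜}, for n ≥ 1 and 𝒜 ∈ αₙ (i.e. the supremum ⋁ₙ [αₙ,Wₙ]), converges to the zero function 0̄ in the topology τ^⇑. -/

import Mathlib

open TopologicalSpace Topology

/-- A family of open sets is *openly isotone* if it is upward closed among open sets. -/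
def OpenlyIsotone {X : Type*} [TopologicalSpace X] (A : Set (Opens X)) : Prop :=
  ∀ ⦃U V : Opens X⦄, U ∈ A → U ≤ V → V ∈ A

/-- The preimage of an open set under a continuous map, as an open set. -/
def preim {X Z : Type*} [TopologicalSpace X] [TopologicalSpace Z]
    (f : C(X, Z)) (U : Opens Z) : Opens X :=
  ⟨f ⁻¹' U, U.isOpen.preimage f.continuous⟩

/-- The basic open neighborhood `Wₙ = (-1/n, 1/n)` of `0` in `ℝ`. -/
def Wball (n : ℕ) : Opens ℝ :=
  ⟨Set.Ioo (-(1 / (n : ℝ))) (1 / (n : ℝ)), isOpen_Ioo⟩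

/-- The topology `τ^⇑` on `C(X,ℝ)`: the initial topology induced by the maps
`f ↦ f⁻¹(U)` into `(C(X,$), τ)`, `U` ranging over open subsets of `ℝ`. -/
def upTop {X : Type*} [TopologicalSpace X] (τ : TopologicalSpace (Opens X)) :
    TopologicalSpace C(X, ℝ) :=
  ⨅ U : Opens ℝ, TopologicalSpace.induced (fun f : C(X, ℝ) => preim f U) τ

/-- If for each `n ≥ 1` the filter `αₙ` on `C(X,$)` has a base of openly isotone families
and converges to `X` in `τ`, then the filter on `C(X,ℝ)` generated by the sets `[𝒜,Wₙ]`
(`n ≥ 1`, `𝒜 ∈ αₙ`), i.e. the supremum `⋁ₙ [αₙ,Wₙ]`, converges to the zero function in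
`τ^⇑`. -/
theorem sup_erected_tendsto_zero {X : Type*} [TopologicalSpace X]
    (τ : TopologicalSpace (Opens X))
    (hiso : ∀ S : Set (Opens X), IsOpen[τ] S → OpenlyIsotone S)
    (α : ℕ → Filter (Opens X))
    (hbase : ∀ n, 1 ≤ n → ∀ S ∈ α n, ∃ A ∈ α n, A ⊆ S ∧ OpenlyIsotone A)
    (hconv : ∀ n, 1 ≤ n → α n ≤ @nhds _ τ (⊤ : Opens X)) :
    Filter.generate
        {S : Set C(X, ℝ) |
          ∃ n, 1 ≤ n ∧ ∃ A ∈ α n, S = {f : C(X, ℝ) | preim f (Wball n) ∈ A}} ≤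
      @nhds _ (upTop τ) (0 : C(X, ℝ)) := by

  rw [upTop, nhds_iInf]
  refine le_iInf fun U => ?_
  rw [nhds_induced]
  refine Filter.Tendsto.le_comap ?_
  by_cases hU : (0 : ℝ) ∈ U
  · -- preim 0 U = ⊤
    have h0 : preim (0 : C(X, ℝ)) U = ⊤ := by
      apply Opens.ext
      ext x
      simp [preim, hU]
    rw [h0]
    -- find n with Wball n ⊆ U
    obtain ⟨ε, hε, hball⟩ := Metric.isOpen_iff.1 U.isOpen 0 hU
    obtain ⟨n, hn⟩ := exists_nat_one_div_lt hε
    have hWU : (Wball (n + 1) : Set ℝ) ⊆ (U : Set ℝ) := by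
      intro x hx
      apply hball
      rw [Real.ball_eq_Ioo]
      simp only [zero_sub, zero_add]
      rcases hx with ⟨h1, h2⟩
      push_cast at h1 h2
      constructor <;> linarith
    intro s hs
    obtain ⟨t, hts, ht_open, h_top⟩ := (@mem_nhds_iff _ τ _ _).1 hs
    have htα : t ∈ α (n + 1) := hconv (n + 1) (by omega) (@IsOpen.mem_nhds (Opens X) τ ⊤ t ht_open h_top)
    have hgen : {f : C(X, ℝ) | preim f (Wball (n + 1)) ∈ t} ∈
        Filter.generate {S : Set C(X, ℝ) |
          ∃ m, 1 ≤ m ∧ ∃ A ∈ α m, S = {f : C(X, ℝ) | preim f (Wball m) ∈ A}} :=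
      Filter.mem_generate_of_mem ⟨n + 1, by omega, t, htα, rfl⟩
    rw [Filter.mem_map]
    refine Filter.mem_of_superset hgen ?_
    intro f hf
    apply hts
    exact hiso t ht_open hf (fun x hx => hWU hx)
  · -- preim 0 U = ⊥
    have h0 : preim (0 : C(X, ℝ)) U = ⊥ := by
      apply Opens.ext
      ext x
      simp [preim, hU]
    rw [h0]
    intro s hs
    obtain ⟨t, hts, ht_open, h_bot⟩ := (@mem_nhds_iff _ τ _ _).1 hs
    have hall : (fun f : C(X, ℝ) => preim f U) ⁻¹' s = Set.univ := by
      ext f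
      simp only [Set.mem_preimage, Set.mem_univ, iff_true]
      exact hts (hiso t ht_open h_bot bot_le)
    rw [Filter.mem_map, hall]
    exact Filter.univ_mem
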